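/- For the noncommutative 2-torus as a cleft extension with B = span{(uv)^k}, any FODC (Ω¹(B), d_B) on B satisfying d_B∘σ = 0 (with the 2-cocycle σ of the cleft structure, in particular σ(t⊗t⁻¹) = uv) must be the zero calculus: d_B((uv)^l) = 0 for all l ∈ ℤ and hence Ω¹(B) = 0. -/

import Mathlib

noncomputable section

/-- A bimodule over a `k`-algebra `A`, given by a pair of commuting bilinear actions. -/
structure BimodData (k : Type) [Field k] (A M : Type) [Ring A] [Algebra k A]
    [AddCommGroup M] [Module k M] where
  l : A →ₗ[k] M →ₗ[k] M
  r : M →ₗ[k] A →ₗ[k] M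
  one_l : ∀ m : M, l 1 m = m
  r_one : ∀ m : M, r m 1 = m
  mul_l : ∀ (a b : A) (m : M), l (a * b) m = l a (l b m)
  r_mul : ∀ (m : M) (a b : A), r (r m a) b = r m (a * b)
  l_r : ∀ (a : A) (m : M) (b : A), r (l a m) b = l a (r m b)

/-- A first order differential calculus on `A` with bimodule of 1-forms `M`. -/
structure FODCData (k : Type) [Field k] (A M : Type) [Ring A] [Algebra k A]
    [AddCommGroup M] [Module k M] extends BimodData k A M where
  d : A →ₗ[k] M
  leibniz : ∀ a b : A, d (a * b) = r (d a) b + l a (d b)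
  spanning : ∀ m : M, m ∈ Submodule.span k {z : M | ∃ a b : A, z = l a (d b)}

/-- For the noncommutative 2-torus as a cleft extension, the base
algebra is `B = span_ℂ{(uv)^k : k ∈ ℤ} ≅ ℂ[z, z⁻¹]` (Laurent polynomials, with
`z = uv = LaurentPolynomial.T 1`).  Any FODC `(Ω¹(B), d_B)` on `B` satisfying
`d_B ∘ σ = 0` — in particular `d_B(z) = d_B(σ(t ⊗ t⁻¹)) = 0` — must be the zero calculus:
`d_B((uv)^l) = 0` for all `l ∈ ℤ` and hence `Ω¹(B) = 0`. -/
theorem torus_base_calculus_is_zero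
    (M : Type) [AddCommGroup M] [Module ℂ M]
    (F : FODCData ℂ (LaurentPolynomial ℂ) M)
    (h_dσ : F.d (LaurentPolynomial.T 1) = 0) :
    (∀ l : ℤ, F.d (LaurentPolynomial.T l) = 0) ∧ (∀ m : M, m = 0) := by
  have h1 : F.d 1 = 0 := by
    have := F.leibniz 1 1
    simp only [one_mul, F.one_l] at this
    have h0 : F.r (F.d 1) 1 = F.d 1 := F.r_one _
    rw [h0] at this
    -- d 1 = d 1 + d 1
    exact add_eq_right.mp this.symm
  -- d (T (-1)) = 0
  have hneg : F.d (LaurentPolynomial.T (-1)) = 0 := by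
    have hmul : (LaurentPolynomial.T 1 : LaurentPolynomial ℂ) * LaurentPolynomial.T (-1) = 1 := by
      rw [← LaurentPolynomial.T_add]; norm_num [LaurentPolynomial.T_zero]
    have := F.leibniz (LaurentPolynomial.T 1) (LaurentPolynomial.T (-1))
    rw [hmul, h1, h_dσ] at this
    simp only [map_zero, LinearMap.zero_apply, zero_add] at this
    -- 0 = l (T 1) (d (T (-1)))
    have hinv : F.l (LaurentPolynomial.T (-1)) (F.l (LaurentPolynomial.T 1)
        (F.d (LaurentPolynomial.T (-1)))) = F.d (LaurentPolynomial.T (-1)) := by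
      rw [← F.mul_l, ← LaurentPolynomial.T_add]
      norm_num [LaurentPolynomial.T_zero, F.one_l]
    rw [← this, map_zero] at hinv
    exact hinv.symm
  have key : ∀ l : ℤ, F.d (LaurentPolynomial.T l) = 0 := by
    intro l
    induction l using Int.induction_on with
    | zero => simpa [LaurentPolynomial.T_zero] using h1
    | succ n ih =>
        have := F.leibniz (LaurentPolynomial.T n) (LaurentPolynomial.T 1)
        rw [← LaurentPolynomial.T_add] at this
        rw [this, ih, h_dσ]
        simp
    | pred n ih =>
        have := F.leibniz (LaurentPolynomial.T (-n)) (LaurentPolynomial.T (-1))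
        rw [← LaurentPolynomial.T_add] at this
        rw [show (-(n:ℤ)-1) = (-(n:ℤ) + -1) by ring, this, ih, hneg]
        simp
  refine ⟨key, ?_⟩
  have dzero : ∀ a : LaurentPolynomial ℂ, F.d a = 0 := by
    intro a
    induction a using LaurentPolynomial.induction_on' with
    | add p q hp hq => rw [map_add, hp, hq, add_zero]
    | C_mul_T n c =>
        have : (LaurentPolynomial.C c : LaurentPolynomial ℂ) * LaurentPolynomial.T n
            = c • LaurentPolynomial.T n := by
          rw [Algebra.smul_def, ← LaurentPolynomial.C_eq_algebraMap]
        rw [this, map_smul, key, smul_zero]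
  intro m
  have := F.spanning m
  have hset : {z : M | ∃ a b : LaurentPolynomial ℂ, z = F.l a (F.d b)} ⊆ {(0 : M)} := by
    rintro z ⟨a, b, rfl⟩
    simp [dzero b]
  have : m ∈ Submodule.span ℂ ({0} : Set M) :=
    Submodule.span_mono hset this
  simpa using this

end
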